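/- The double integral ∫_0^∞ ∫_0^∞ dr ds / [(1+r)(1+s)·√((1+r+s)² − 4rs)] converges and is strictly greater than π²/6. -/

import Mathlib

open MeasureTheory Real

section Aux

open Set Filter Topology

lemma aux_h_meas : Measurable (fun t : ℝ => ((Real.sqrt (Real.sqrt t)) * (1 + t))⁻¹) := by
  fun_prop

lemma aux_sqrt_sqrt_rpow {t : ℝ} (ht0 : 0 < t) :
    Real.sqrt (Real.sqrt t) = t ^ ((1:ℝ)/4) := by
  rw [Real.sqrt_eq_rpow, Real.sqrt_eq_rpow, ← Real.rpow_mul ht0.le]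
  norm_num

lemma aux_h_int : IntegrableOn (fun t : ℝ => ((Real.sqrt (Real.sqrt t)) * (1 + t))⁻¹)
    (Set.Ioi 0) := by
  have hsplit : Set.Ioi (0:ℝ) = Set.Ioc 0 1 ∪ Set.Ioi 1 := by
    rw [Set.Ioc_union_Ioi_eq_Ioi]; norm_num
  rw [hsplit]
  apply IntegrableOn.union
  · have hd : IntegrableOn (fun t : ℝ => t ^ (-(1/4) : ℝ)) (Set.Ioc 0 1) := by
      have := (intervalIntegral.intervalIntegrable_rpow' (a := 0) (b := 1)
        (r := -(1/4)) (by norm_num))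
      rwa [intervalIntegrable_iff_integrableOn_Ioc_of_le (by norm_num)] at this
    refine hd.mono' (aux_h_meas.aestronglyMeasurable) ?_
    filter_upwards [ae_restrict_mem measurableSet_Ioc] with t ht
    have ht0 : (0:ℝ) < t := ht.1
    rw [Real.norm_eq_abs, abs_of_nonneg (by positivity), aux_sqrt_sqrt_rpow ht0]
    calc (t ^ ((1:ℝ)/4) * (1 + t))⁻¹ ≤ (t ^ ((1:ℝ)/4) * 1)⁻¹ := by
          apply inv_anti₀ (by positivity)
          have : (1:ℝ) ≤ 1 + t := by linarith
          nlinarith [Real.rpow_pos_of_pos ht0 ((1:ℝ)/4)]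
      _ = t ^ (-(1/4) : ℝ) := by
          rw [mul_one, Real.rpow_neg ht0.le]
  · have hd : IntegrableOn (fun t : ℝ => t ^ (-(5/4) : ℝ)) (Set.Ioi 1) :=
      integrableOn_Ioi_rpow_of_lt (by norm_num) one_pos
    refine hd.mono' (aux_h_meas.aestronglyMeasurable) ?_
    filter_upwards [ae_restrict_mem measurableSet_Ioi] with t ht
    have ht0 : (0:ℝ) < t := lt_trans one_pos ht
    rw [Real.norm_eq_abs, abs_of_nonneg (by positivity), aux_sqrt_sqrt_rpow ht0]
    have hmul : t ^ ((1:ℝ)/4) * t = t ^ ((5:ℝ)/4) := by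
      nth_rewrite 2 [← Real.rpow_one t]
      rw [← Real.rpow_add ht0]; norm_num
    have hneg : t ^ (-(5/4) : ℝ) = (t ^ ((5:ℝ)/4))⁻¹ := by
      rw [Real.rpow_neg ht0.le]
    rw [hneg, ← hmul]
    apply inv_anti₀ (by positivity)
    nlinarith [Real.rpow_pos_of_pos ht0 ((1:ℝ)/4)]

lemma aux_sqrt_lb {r s : ℝ} (hr : 0 < r) (hs : 0 < s) :
    2 * Real.sqrt (Real.sqrt r) * Real.sqrt (Real.sqrt s)
      ≤ Real.sqrt ((1 + r + s) ^ 2 - 4 * r * s) := by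
  have e1 : Real.sqrt r ^ 2 = r := Real.sq_sqrt hr.le
  have e2 : Real.sqrt s ^ 2 = s := Real.sq_sqrt hs.le
  have key : Real.sqrt (4 * (Real.sqrt r * Real.sqrt s))
      ≤ Real.sqrt ((1 + r + s) ^ 2 - 4 * r * s) := by
    apply Real.sqrt_le_sqrt
    nlinarith [sq_nonneg (Real.sqrt r - Real.sqrt s), sq_nonneg (1 + r - s),
      sq_nonneg (1 + s - r), Real.sqrt_nonneg r, Real.sqrt_nonneg s]
  have h4 : Real.sqrt 4 = 2 := by
    rw [show (4:ℝ) = 2 ^ 2 by norm_num, Real.sqrt_sq (by norm_num)]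
  calc 2 * Real.sqrt (Real.sqrt r) * Real.sqrt (Real.sqrt s)
      = Real.sqrt (4 * (Real.sqrt r * Real.sqrt s)) := by
        rw [Real.sqrt_mul (by norm_num), Real.sqrt_mul (Real.sqrt_nonneg r), h4]; ring
    _ ≤ _ := key

lemma aux_f_meas : Measurable (fun p : ℝ × ℝ =>
    1 / ((1 + p.1) * (1 + p.2) * Real.sqrt ((1 + p.1 + p.2) ^ 2 - 4 * p.1 * p.2))) := by
  fun_prop

lemma aux_f_int : IntegrableOn
    (fun p : ℝ × ℝ =>
      1 / ((1 + p.1) * (1 + p.2) * Real.sqrt ((1 + p.1 + p.2) ^ 2 - 4 * p.1 * p.2)))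
    (Set.Ioi 0 ×ˢ Set.Ioi 0) volume := by
  have hG : IntegrableOn (fun p : ℝ × ℝ =>
      2⁻¹ * (((Real.sqrt (Real.sqrt p.1)) * (1 + p.1))⁻¹ *
        ((Real.sqrt (Real.sqrt p.2)) * (1 + p.2))⁻¹)) (Set.Ioi 0 ×ˢ Set.Ioi 0) volume := by
    rw [IntegrableOn, Measure.volume_eq_prod, ← Measure.prod_restrict]
    exact (aux_h_int.mul_prod aux_h_int).const_mul _
  refine hG.mono' aux_f_meas.aestronglyMeasurable ?_
  rw [Measure.volume_eq_prod]
  filter_upwards [ae_restrict_mem ((measurableSet_Ioi).prod measurableSet_Ioi)] with p hp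
  obtain ⟨hr, hs⟩ := hp
  set r := p.1; set s := p.2
  have hr : (0:ℝ) < r := hr
  have hs : (0:ℝ) < s := hs
  have hD : (0:ℝ) < (1 + r + s) ^ 2 - 4 * r * s := by nlinarith [sq_nonneg (1 + r - s)]
  have hS : 0 < Real.sqrt ((1 + r + s) ^ 2 - 4 * r * s) := Real.sqrt_pos.mpr hD
  have hlb := aux_sqrt_lb hr hs
  have h4r : 0 < Real.sqrt (Real.sqrt r) := Real.sqrt_pos.mpr (Real.sqrt_pos.mpr hr)
  have h4s : 0 < Real.sqrt (Real.sqrt s) := Real.sqrt_pos.mpr (Real.sqrt_pos.mpr hs)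
  rw [Real.norm_eq_abs, abs_of_nonneg (by positivity)]
  have key : 2 * (Real.sqrt (Real.sqrt r) * (1 + r)) * (Real.sqrt (Real.sqrt s) * (1 + s))
      ≤ (1 + r) * (1 + s) * Real.sqrt ((1 + r + s) ^ 2 - 4 * r * s) := by
    nlinarith [mul_le_mul_of_nonneg_left hlb
      (by positivity : (0:ℝ) ≤ (1 + r) * (1 + s))]
  calc 1 / ((1 + r) * (1 + s) * Real.sqrt ((1 + r + s) ^ 2 - 4 * r * s))
      ≤ 1 / (2 * (Real.sqrt (Real.sqrt r) * (1 + r)) * (Real.sqrt (Real.sqrt s) * (1 + s))) := by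
        apply one_div_le_one_div_of_le (by positivity) key
    _ = 2⁻¹ * (((Real.sqrt (Real.sqrt r)) * (1 + r))⁻¹ *
        ((Real.sqrt (Real.sqrt s)) * (1 + s))⁻¹) := by
        field_simp

lemma aux_inner_int {r : ℝ} (hr : 0 < r) :
    ∫ s in Set.Ioi (0:ℝ), ((1 + s) * (1 + r + s))⁻¹ = Real.log (1 + r) / r := by
  have hderiv : ∀ s ∈ Set.Ici (0:ℝ),
      HasDerivAt (fun s => r⁻¹ * (Real.log (1 + s) - Real.log (1 + r + s)))
        (((1 + s) * (1 + r + s))⁻¹) s := by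
    intro s hs
    have hs0 : (0:ℝ) ≤ s := hs
    have h1 : (1:ℝ) + s ≠ 0 := by positivity
    have h2 : (1:ℝ) + r + s ≠ 0 := by positivity
    have d1 : HasDerivAt (fun s : ℝ => Real.log (1 + s)) (1 / (1 + s)) s := by
      have := ((hasDerivAt_id s).const_add (1:ℝ)).log h1
      simpa using this
    have d2 : HasDerivAt (fun s : ℝ => Real.log (1 + r + s)) (1 / (1 + r + s)) s := by
      have := ((hasDerivAt_id s).const_add (1 + r)).log h2
      simpa using this
    have := ((d1.sub d2).const_mul r⁻¹)
    refine this.congr_deriv ?_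
    field_simp
    ring
  have hpos : ∀ s ∈ Set.Ioi (0:ℝ), 0 ≤ ((1 + s) * (1 + r + s))⁻¹ := by
    intro s hs
    have : (0:ℝ) < s := hs
    positivity
  have htends : Tendsto (fun s => r⁻¹ * (Real.log (1 + s) - Real.log (1 + r + s)))
      atTop (𝓝 0) := by
    have hq : Tendsto (fun s : ℝ => (1 + s) / (1 + r + s)) atTop (𝓝 1) := by
      have hden : Tendsto (fun s : ℝ => 1 + r + s) atTop atTop :=
        tendsto_atTop_add_const_left _ _ tendsto_id
      have h0 : Tendsto (fun s : ℝ => r * (1 + r + s)⁻¹) atTop (𝓝 0) := by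
        have := (tendsto_inv_atTop_zero.comp hden).const_mul r
        simpa using this
      have h1 : Tendsto (fun s : ℝ => 1 - r * (1 + r + s)⁻¹) atTop (𝓝 1) := by
        simpa using tendsto_const_nhds.sub h0
      apply h1.congr'
      filter_upwards [eventually_gt_atTop (0:ℝ)] with s hs
      have h2 : (1:ℝ) + r + s ≠ 0 := by positivity
      field_simp
      ring
    have hlog : Tendsto (fun s : ℝ => Real.log ((1 + s) / (1 + r + s))) atTop (𝓝 0) := by
      have := (Real.continuousAt_log one_ne_zero).tendsto.comp hq
      simpa [Real.log_one, Function.comp_def] using this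
    have heq : Tendsto (fun s : ℝ => Real.log (1 + s) - Real.log (1 + r + s)) atTop (𝓝 0) := by
      apply hlog.congr'
      filter_upwards [eventually_gt_atTop (0:ℝ)] with s hs
      rw [Real.log_div (by positivity) (by positivity)]
    simpa using heq.const_mul r⁻¹
  have := integral_Ioi_of_hasDerivAt_of_nonneg' hderiv hpos htends
  rw [this]
  simp [Real.log_one]
  field_simp

lemma aux_pow_int_val (n : ℕ) :
    ∫ x in Set.Ioo (0:ℝ) 1, x ^ n / (n + 1) = 1 / ((n:ℝ) + 1) ^ 2 := by
  rw [integral_div, ← integral_Ioc_eq_integral_Ioo,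
    ← intervalIntegral.integral_of_le (by norm_num : (0:ℝ) ≤ 1), integral_pow]
  have hn : ((n:ℝ) + 1) ≠ 0 := by positivity
  simp
  field_simp

lemma aux_pow_intgr (n : ℕ) :
    IntegrableOn (fun x : ℝ => x ^ n / (n + 1)) (Set.Ioo (0:ℝ) 1) := by
  exact (Continuous.integrableOn_Icc (by continuity)).mono_set Set.Ioo_subset_Icc_self

lemma aux_summ : Summable (fun n : ℕ => 1 / ((n:ℝ) + 1) ^ 2) := by
  have := ((hasSum_nat_add_iff' (f := fun n : ℕ => 1 / (n:ℝ) ^ 2) 1).mpr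
    hasSum_zeta_two).summable
  simpa using this

lemma aux_sum_val : ∑' n : ℕ, 1 / ((n:ℝ) + 1) ^ 2 = π ^ 2 / 6 := by
  have h := (hasSum_nat_add_iff' (f := fun n : ℕ => 1 / (n:ℝ) ^ 2) 1).mpr hasSum_zeta_two
  have h2 : HasSum (fun n : ℕ => 1 / ((n:ℝ) + 1) ^ 2) (π ^ 2 / 6) := by
    simpa using h
  exact h2.tsum_eq

lemma aux_series_int : ∫ x in Set.Ioo (0:ℝ) 1, (-Real.log (1 - x)) / x = π ^ 2 / 6 := by
  have hsum : ∀ x ∈ Set.Ioo (0:ℝ) 1,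
      HasSum (fun n : ℕ => x ^ n / ((n:ℝ) + 1)) (-Real.log (1 - x) / x) := by
    intro x hx
    have h := hasSum_pow_div_log_of_abs_lt_one
      (x := x) (by rw [abs_of_nonneg hx.1.le]; exact hx.2)
    have h2 := h.div_const x
    apply h2.congr_fun
    intro n
    have hx0 : x ≠ 0 := ne_of_gt hx.1
    field_simp
    ring
  have hcongr : ∫ x in Set.Ioo (0:ℝ) 1, (-Real.log (1 - x)) / x
      = ∫ x in Set.Ioo (0:ℝ) 1, ∑' n : ℕ, x ^ n / ((n:ℝ) + 1) := by
    apply setIntegral_congr_fun measurableSet_Ioo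
    intro x hx
    exact ((hsum x hx).tsum_eq).symm
  rw [hcongr]
  rw [MeasureTheory.integral_tsum]
  · have : ∀ n : ℕ, ∫ x in Set.Ioo (0:ℝ) 1, x ^ n / ((n:ℝ) + 1) = 1 / ((n:ℝ) + 1) ^ 2 :=
      aux_pow_int_val
    rw [tsum_congr this, aux_sum_val]
  · intro n
    exact (Continuous.aestronglyMeasurable (by continuity))
  · have hval : ∀ n : ℕ, ∫⁻ x in Set.Ioo (0:ℝ) 1, ‖x ^ n / ((n:ℝ) + 1)‖ₑ
        = ENNReal.ofReal (1 / ((n:ℝ) + 1) ^ 2) := by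
      intro n
      rw [← aux_pow_int_val n, ofReal_integral_eq_lintegral_ofReal (aux_pow_intgr n)]
      · apply lintegral_congr_ae
        filter_upwards [ae_restrict_mem measurableSet_Ioo] with x hx
        have hx1 : 0 < x := hx.1
        rw [← Real.enorm_eq_ofReal (by positivity)]
      · filter_upwards [ae_restrict_mem measurableSet_Ioo] with x hx
        have hx1 : 0 < x := hx.1
        positivity
    rw [tsum_congr hval, ← ENNReal.ofReal_tsum_of_nonneg (fun n => by positivity) aux_summ]
    exact ENNReal.ofReal_ne_top

lemma aux_outer_int :
    ∫ r in Set.Ioi (0:ℝ), (1 + r)⁻¹ * (Real.log (1 + r) / r) = π ^ 2 / 6 := by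
  have himg : (fun x : ℝ => x / (1 - x)) '' Set.Ioo 0 1 = Set.Ioi 0 := by
    ext y
    constructor
    · rintro ⟨x, hx, rfl⟩
      have h1 : 0 < 1 - x := by linarith [hx.2]
      exact div_pos hx.1 h1
    · intro hy
      have hy0 : (0:ℝ) < y := hy
      refine ⟨y / (1 + y), ⟨by positivity, ?_⟩, ?_⟩
      · rw [div_lt_one (by positivity)]; linarith
      · have h1 : (1:ℝ) + y ≠ 0 := by positivity
        field_simp
        ring
  have hderiv : ∀ x ∈ Set.Ioo (0:ℝ) 1,
      HasDerivWithinAt (fun x : ℝ => x / (1 - x)) (((1 - x) ^ 2)⁻¹) (Set.Ioo 0 1) x := by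
    intro x hx
    have h1 : 1 - x ≠ 0 := by intro h; nlinarith [hx.2]
    have := (hasDerivAt_id x).div ((hasDerivAt_id x).const_sub 1) h1
    apply HasDerivAt.hasDerivWithinAt
    refine this.congr_deriv ?_
    simp only [id]
    field_simp
    ring
  have hinj : Set.InjOn (fun x : ℝ => x / (1 - x)) (Set.Ioo 0 1) := by
    intro a ha b hb hab
    have h1 : 1 - a ≠ 0 := by intro h; nlinarith [ha.2]
    have h2 : 1 - b ≠ 0 := by intro h; nlinarith [hb.2]
    field_simp at hab
    linarith
  have := integral_image_eq_integral_abs_deriv_smul measurableSet_Ioo hderiv hinj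
    (fun y => (1 + y)⁻¹ * (Real.log (1 + y) / y))
  rw [himg] at this
  rw [this, ← aux_series_int]
  apply setIntegral_congr_fun measurableSet_Ioo
  intro x hx
  have hx0 : 0 < x := hx.1
  have h1 : 0 < 1 - x := by linarith [hx.2]
  have e1 : 1 + x / (1 - x) = (1 - x)⁻¹ := by field_simp; ring
  simp only [smul_eq_mul]
  rw [e1, Real.log_inv, abs_of_nonneg (by positivity)]
  field_simp

lemma aux_g_meas : Measurable (fun p : ℝ × ℝ =>
    ((1 + p.1) * (1 + p.2) * (1 + p.1 + p.2))⁻¹) := by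
  fun_prop

lemma aux_g_int : IntegrableOn
    (fun p : ℝ × ℝ => ((1 + p.1) * (1 + p.2) * (1 + p.1 + p.2))⁻¹)
    (Set.Ioi 0 ×ˢ Set.Ioi 0) volume := by
  refine aux_f_int.mono' aux_g_meas.aestronglyMeasurable ?_
  filter_upwards [ae_restrict_mem ((measurableSet_Ioi).prod measurableSet_Ioi)] with p hp
  obtain ⟨hr, hs⟩ := hp
  set r := p.1; set s := p.2
  have hr : (0:ℝ) < r := hr
  have hs : (0:ℝ) < s := hs
  have hD : (0:ℝ) < (1 + r + s) ^ 2 - 4 * r * s := by nlinarith [sq_nonneg (1 + r - s)]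
  have hS : 0 < Real.sqrt ((1 + r + s) ^ 2 - 4 * r * s) := Real.sqrt_pos.mpr hD
  have hSle : Real.sqrt ((1 + r + s) ^ 2 - 4 * r * s) ≤ 1 + r + s := by
    have h := Real.sqrt_le_sqrt (show (1 + r + s) ^ 2 - 4 * r * s ≤ (1 + r + s) ^ 2 by nlinarith)
    rwa [Real.sqrt_sq (by positivity)] at h
  rw [Real.norm_eq_abs, abs_of_nonneg (by positivity), ← one_div]
  apply one_div_le_one_div_of_le (by positivity)
  nlinarith [mul_le_mul_of_nonneg_left hSle (by positivity : (0:ℝ) ≤ (1 + r) * (1 + s))]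

lemma aux_g_val :
    ∫ p in Set.Ioi (0:ℝ) ×ˢ Set.Ioi (0:ℝ),
      ((1 + p.1) * (1 + p.2) * (1 + p.1 + p.2))⁻¹ = π ^ 2 / 6 := by
  have hint := aux_g_int
  rw [IntegrableOn, Measure.volume_eq_prod] at hint
  rw [Measure.volume_eq_prod]
  rw [setIntegral_prod _ hint]
  rw [← aux_outer_int]
  apply setIntegral_congr_fun measurableSet_Ioi
  intro r hr
  have hr0 : (0:ℝ) < r := hr
  have : ∀ s : ℝ, ((1 + r) * (1 + s) * (1 + r + s))⁻¹
      = (1 + r)⁻¹ * ((1 + s) * (1 + r + s))⁻¹ := by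
    intro s
    rw [mul_assoc, mul_inv]
  simp only [this]
  rw [integral_const_mul, aux_inner_int hr0]

end Aux

/-- The double integral `∫_0^∞∫_0^∞ dr ds/[(1+r)(1+s)√((1+r+s)²−4rs)]` converges and is
strictly greater than `π²/6`. -/
theorem stmt_14 :
    IntegrableOn
      (fun p : ℝ × ℝ =>
        1 / ((1 + p.1) * (1 + p.2) * Real.sqrt ((1 + p.1 + p.2) ^ 2 - 4 * p.1 * p.2)))
      (Set.Ioi 0 ×ˢ Set.Ioi 0) volume
    ∧ π ^ 2 / 6 <
      ∫ p in Set.Ioi (0 : ℝ) ×ˢ Set.Ioi (0 : ℝ),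
        1 / ((1 + p.1) * (1 + p.2) * Real.sqrt ((1 + p.1 + p.2) ^ 2 - 4 * p.1 * p.2)) := by
  refine ⟨aux_f_int, ?_⟩
  set f := fun p : ℝ × ℝ =>
    1 / ((1 + p.1) * (1 + p.2) * Real.sqrt ((1 + p.1 + p.2) ^ 2 - 4 * p.1 * p.2)) with hf
  set g := fun p : ℝ × ℝ => ((1 + p.1) * (1 + p.2) * (1 + p.1 + p.2))⁻¹ with hg
  have hdiff_pos : ∀ p ∈ Set.Ioi (0:ℝ) ×ˢ Set.Ioi (0:ℝ), 0 < f p - g p := by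
    rintro p ⟨hr, hs⟩
    set r := p.1; set s := p.2
    have hr : (0:ℝ) < r := hr
    have hs : (0:ℝ) < s := hs
    have hD : (0:ℝ) < (1 + r + s) ^ 2 - 4 * r * s := by nlinarith [sq_nonneg (1 + r - s)]
    have hS : 0 < Real.sqrt ((1 + r + s) ^ 2 - 4 * r * s) := Real.sqrt_pos.mpr hD
    have hSlt : Real.sqrt ((1 + r + s) ^ 2 - 4 * r * s) < 1 + r + s := by
      have h := Real.sqrt_lt_sqrt hD.le
        (show (1 + r + s) ^ 2 - 4 * r * s < (1 + r + s) ^ 2 by nlinarith)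
      rwa [Real.sqrt_sq (by positivity)] at h
    have key : (1 + r) * (1 + s) * Real.sqrt ((1 + r + s) ^ 2 - 4 * r * s)
        < (1 + r) * (1 + s) * (1 + r + s) :=
      mul_lt_mul_of_pos_left hSlt (by positivity)
    have : (1:ℝ) / ((1 + r) * (1 + s) * (1 + r + s))
        < 1 / ((1 + r) * (1 + s) * Real.sqrt ((1 + r + s) ^ 2 - 4 * r * s)) :=
      one_div_lt_one_div_of_lt (by positivity) key
    have hgp : g p = 1 / ((1 + r) * (1 + s) * (1 + r + s)) := by rw [hg, one_div]
    rw [hgp]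
    linarith
  have hsub_int : IntegrableOn (fun p => f p - g p)
      (Set.Ioi (0:ℝ) ×ˢ Set.Ioi (0:ℝ)) volume := aux_f_int.sub aux_g_int
  have hpos : 0 < ∫ p in Set.Ioi (0:ℝ) ×ˢ Set.Ioi (0:ℝ), (f p - g p) := by
    rw [setIntegral_pos_iff_support_of_nonneg_ae ?_ hsub_int]
    · apply lt_of_lt_of_le ?_ (measure_mono (show Set.Ioo (0:ℝ) 1 ×ˢ Set.Ioo (0:ℝ) 1
        ⊆ Function.support (fun p => f p - g p) ∩ (Set.Ioi (0:ℝ) ×ˢ Set.Ioi (0:ℝ)) from ?_))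
      · rw [Measure.volume_eq_prod, Measure.prod_prod, Real.volume_Ioo]
        norm_num
      · rintro p ⟨hp1, hp2⟩
        have hmem : p ∈ Set.Ioi (0:ℝ) ×ˢ Set.Ioi (0:ℝ) := ⟨hp1.1, hp2.1⟩
        exact ⟨ne_of_gt (hdiff_pos p hmem), hmem⟩
    · filter_upwards [ae_restrict_mem ((measurableSet_Ioi).prod measurableSet_Ioi)] with p hp
      exact (hdiff_pos p hp).le
  have heq : ∫ p in Set.Ioi (0:ℝ) ×ˢ Set.Ioi (0:ℝ), (f p - g p)
      = (∫ p in Set.Ioi (0:ℝ) ×ˢ Set.Ioi (0:ℝ), f p)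
        - ∫ p in Set.Ioi (0:ℝ) ×ˢ Set.Ioi (0:ℝ), g p :=
    integral_sub aux_f_int aux_g_int
  have hgval : ∫ p in Set.Ioi (0:ℝ) ×ˢ Set.Ioi (0:ℝ), g p = π ^ 2 / 6 := aux_g_val
  rw [heq, hgval] at hpos
  linarith
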